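/- Let g(z) = (z − α)(z − β) f(z) where α = e^{ia}, β = e^{−ia}, a ∈ (0,1), and f is a polynomial with all coefficients of absolute value at most 1 (of any degree). Then for every z on the chord I₀ joining α and β, |g(z)| ≤ 2/sin(a). -/

import Mathlib

open Complex Polynomial

theorem chord_bound (a : ℝ) (ha : a ∈ Set.Ioo (0:ℝ) 1)
    (α β : ℂ) (hα : α = Complex.exp (Complex.I * a)) (hβ : β = Complex.exp (-Complex.I * a))
    (f : Polynomial ℂ) (hf : ∀ i, ‖f.coeff i‖ ≤ 1)
    (z : ℂ) (hz : ∃ t : ℝ, t ∈ Set.Icc (0:ℝ) 1 ∧ z = t • α + (1 - t) • β) :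
    ‖(z - α) * (z - β) * f.eval z‖ ≤ 2 / Real.sin a := by
  obtain ⟨t, ht, hzt⟩ := hz
  have hs : 0 < Real.sin a :=
    Real.sin_pos_of_pos_of_lt_pi ha.1 (ha.2.trans (by linarith [Real.pi_gt_three]))
  have hs1 : Real.sin a ≤ 1 := Real.sin_le_one a
  have hα' : α = (Real.cos a : ℂ) + (Real.sin a : ℂ) * I := by
    rw [hα, mul_comm, Complex.exp_mul_I]
    push_cast
    ring
  have hβ' : β = (Real.cos a : ℂ) - (Real.sin a : ℂ) * I := by
    rw [hβ, neg_mul, mul_comm, ← neg_mul, Complex.exp_mul_I]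
    push_cast [Complex.cos_neg, Complex.sin_neg]
    ring
  set q : ℝ := 4 * t * (1 - t) * Real.sin a ^ 2 with hqdef
  have hq : 0 ≤ q := by
    have h1t : (0:ℝ) ≤ 1 - t := by linarith [ht.2]
    nlinarith [mul_nonneg (mul_nonneg ht.1 h1t) (sq_nonneg (Real.sin a))]
  have hz1 : z - α = ((t - 1 : ℝ) : ℂ) * (α - β) := by
    rw [hzt, Complex.real_smul, Complex.real_smul]
    push_cast
    ring
  have hz2 : z - β = ((t : ℝ) : ℂ) * (α - β) := by
    rw [hzt, Complex.real_smul, Complex.real_smul]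
    push_cast
    ring
  have hαβ : α - β = 2 * (Real.sin a : ℂ) * I := by
    rw [hα', hβ']; ring
  have hprod : (z - α) * (z - β) = ((q : ℝ) : ℂ) := by
    rw [hz1, hz2, hαβ, hqdef]
    push_cast
    linear_combination (4 * (t : ℂ) * ((t:ℂ) - 1) * Complex.sin (a:ℂ) ^ 2) * Complex.I_sq
  have habs_prod : ‖(z - α) * (z - β)‖ = q := by
    rw [hprod, Complex.norm_real, Real.norm_eq_abs, _root_.abs_of_nonneg hq]
  have hzform : z = ((Real.cos a : ℝ) : ℂ) + (((2 * t - 1) * Real.sin a : ℝ) : ℂ) * I := by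
    rw [hzt, hα', hβ', Complex.real_smul, Complex.real_smul]
    push_cast
    ring
  have habs_z_sq : ‖z‖ ^ 2 = Real.cos a ^ 2 + ((2 * t - 1) * Real.sin a) ^ 2 := by
    rw [hzform, Complex.sq_norm, Complex.normSq_add_mul_I]
  have hkey : 1 - ‖z‖ ^ 2 = q := by
    have hsc := Real.sin_sq_add_cos_sq a
    rw [habs_z_sq, hqdef]
    nlinarith [hsc]
  rcases hq.lt_or_eq with hq' | hq'
  · -- 0 < q, so |z| < 1
    have hr0 : 0 ≤ ‖z‖ := norm_nonneg z
    have hr : ‖z‖ < 1 := by nlinarith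
    set r := ‖z‖ with hrdef
    have hfb : ‖f.eval z‖ ≤ 1 / (1 - r) := by
      have h1 : ‖f.eval z‖ ≤ ∑ i ∈ Finset.range (f.natDegree + 1), r ^ i := by
        rw [Polynomial.eval_eq_sum_range]
        refine (norm_sum_le _ _).trans ?_
        apply Finset.sum_le_sum
        intro i _
        rw [norm_mul, norm_pow]
        calc ‖f.coeff i‖ * r ^ i ≤ 1 * r ^ i :=
              mul_le_mul_of_nonneg_right (hf i) (pow_nonneg hr0 i)
          _ = r ^ i := one_mul _
      refine h1.trans ?_
      have hrne : r ≠ 1 := ne_of_lt hr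
      rw [geom_sum_eq hrne, ← neg_sub (1:ℝ) (r ^ (f.natDegree + 1)),
        ← neg_sub (1:ℝ) r, neg_div_neg_eq]
      have hpow : 0 ≤ r ^ (f.natDegree + 1) := pow_nonneg hr0 _
      rw [div_le_div_iff₀ (by linarith) (by linarith)]
      nlinarith
    have hfnn : 0 ≤ ‖f.eval z‖ := norm_nonneg _
    have hstep : (1 - r) * ‖f.eval z‖ ≤ 1 := by
      rw [div_eq_mul_inv, one_mul] at hfb
      calc (1 - r) * ‖f.eval z‖ ≤ (1 - r) * (1 - r)⁻¹ :=
            mul_le_mul_of_nonneg_left hfb (by linarith)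
        _ = 1 := mul_inv_cancel₀ (by linarith)
    have hgoal : ‖(z - α) * (z - β) * f.eval z‖ ≤ 2 := by
      rw [norm_mul, habs_prod, ← hkey]
      nlinarith
    refine hgoal.trans ?_
    rw [le_div_iff₀ hs]
    nlinarith
  · -- q = 0, product vanishes
    rw [norm_mul, habs_prod, ← hq', zero_mul]
    positivity
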